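/- Let D and E be adjacent horizontal-type derivations: D has marked point z₀ = 0 and parameters (e, s, d, u), so D(f·χ^m) = t^s·(⟨m,u⟩·f + d·t·f′)·χ^{m+e}, and E has marked point 0, parameters (ẽ, s̃, d, u) with the same d and u, and twist family (w_z)_{z≠0}, so E(f·χ^m) = t^{s̃}·φ^{ẽ}·(⟨m,u⟩·f + d·(t·f′ − α_m·f))·χ^{m+ẽ}. Assume d·s = −1 − ⟨e,u⟩, d·s̃ = −1 − ⟨ẽ,u⟩, and for every z ≠ 0 with w_z ≠ 0 one has ⟨e,w_z⟩ ≥ 1 and ⟨ẽ,w_z⟩ ≤ −1. Then D and E commute on B if and only if one of the following holds: (1) w_z = 0 for all z ≠ 0; (2) d = 1 (so that the common marked vertex v₀ = u lies in ℤⁿ) and there is exactly one point z₁ ≠ 0 with w_{z₁} ≠ 0, and this w_{z₁} satisfies ⟨e,w_{z₁}⟩ = 1 and ⟨ẽ,w_{z₁}⟩ = −1. -/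

import Mathlib

/- STATEMENT 11: criterion for two *adjacent* horizontal-type derivations to
commute. `D` has marked point `0` and parameters `(e, s, d, u)`; `E` has
marked point `0`, parameters `(e', s', d, u)` (same `d`, `u`) and twist
family `w`. Assuming the Demazure-root relations `d·s = −1 − ⟨e,u⟩`,
`d·s' = −1 − ⟨e',u⟩` and the coherency inequalities `⟨e,w_z⟩ ≥ 1`,
`⟨e',w_z⟩ ≤ −1` for all `z` with `w_z ≠ 0`, the derivations commute iff
(1) all `w_z = 0`, or (2) `d = 1` and there is exactly one `z₁ ≠ 0` with
`w_{z₁} ≠ 0`, and it satisfies `⟨e,w_{z₁}⟩ = 1` and `⟨e',w_{z₁}⟩ = −1`. -/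

noncomputable section

/-- standard pairing `⟨m,v⟩ = Σᵢ mᵢ vᵢ` on `ℤⁿ`. -/
def pairZ {n : ℕ} (m v : Fin n → ℤ) : ℤ := ∑ i, m i * v i

/-- derivative `f ↦ df/dt` of a rational function `f ∈ K(t)`. -/
def rderiv {K : Type*} [Field K] (φ : RatFunc K) : RatFunc K :=
  (algebraMap (Polynomial K) (RatFunc K) (Polynomial.derivative φ.num)
      * algebraMap (Polynomial K) (RatFunc K) φ.denom
    - algebraMap (Polynomial K) (RatFunc K) φ.num
      * algebraMap (Polynomial K) (RatFunc K) (Polynomial.derivative φ.denom))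
    / (algebraMap (Polynomial K) (RatFunc K) φ.denom) ^ 2

/-- twisting family: `φ^m = ∏_{z≠0} (t−z)^{−⟨m,w_z⟩}`, for a finitely
supported family of vectors `w_z ∈ ℤⁿ`. -/
def phim {K : Type*} [Field K] {n : ℕ} (w : K →₀ (Fin n → ℤ)) (m : Fin n → ℤ) :
    RatFunc K :=
  ∏ z ∈ w.support, (RatFunc.X - RatFunc.C z) ^ (-(pairZ m (w z)))

/-- `α_m = t·(φ^m)′/φ^m = −Σ_{z≠0} ⟨m,w_z⟩·t/(t−z)`. -/
def alpham {K : Type*} [Field K] {n : ℕ} (w : K →₀ (Fin n → ℤ)) (m : Fin n → ℤ) :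
    RatFunc K :=
  -∑ z ∈ w.support, (pairZ m (w z) : RatFunc K) * RatFunc.X / (RatFunc.X - RatFunc.C z)

/-- Horizontal-type derivation `D` with marked point `z₀`, parameters
`(e, s, d, u)` and all other vertices `0`:
`f·χ^m ↦ q^s·(⟨m,u⟩·f + d·q·f′)·χ^{m+e}` with `q = t − z₀`. -/
def DhorPt {K : Type*} [Field K] {n : ℕ} (z₀ : K) (e : Fin n → ℤ) (s d : ℤ)
    (u : Fin n → ℤ) (b : (Fin n → ℤ) →₀ RatFunc K) : (Fin n → ℤ) →₀ RatFunc K :=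
  b.sum fun m f => Finsupp.single (m + e)
    ((RatFunc.X - RatFunc.C z₀) ^ s
      * ((pairZ m u : RatFunc K) * f
        + (d : RatFunc K) * (RatFunc.X - RatFunc.C z₀) * rderiv f))

/-- Horizontal-type derivation `E` with marked point `0`, parameters
`(e', s', d', u')` and twist family `w`:
`f·χ^m ↦ t^{s'}·φ^{e'}·(⟨m,u'⟩·f + d'·(t·f′ − α_m·f))·χ^{m+e'}`. -/
def EhorTw {K : Type*} [Field K] {n : ℕ} (e' : Fin n → ℤ) (s' d' : ℤ)
    (u' : Fin n → ℤ) (w : K →₀ (Fin n → ℤ))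
    (b : (Fin n → ℤ) →₀ RatFunc K) : (Fin n → ℤ) →₀ RatFunc K :=
  b.sum fun m f => Finsupp.single (m + e')
    ((RatFunc.X : RatFunc K) ^ s' * phim w e'
      * ((pairZ m u' : RatFunc K) * f
        + (d' : RatFunc K) * (RatFunc.X * rderiv f - alpham w m * f)))


open Polynomial
open scoped Classical

section Helpers
variable {K : Type*} [Field K]

lemma rderiv_div' (p q : K[X]) (hq : q ≠ 0) :
    rderiv (algebraMap K[X] (RatFunc K) p / algebraMap K[X] (RatFunc K) q)
      = algebraMap K[X] (RatFunc K) (derivative p * q - p * derivative q)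
        / algebraMap K[X] (RatFunc K) (q ^ 2) := by
  set f := algebraMap K[X] (RatFunc K) p / algebraMap K[X] (RatFunc K) q with hf
  have hqm : algebraMap K[X] (RatFunc K) q ≠ 0 := RatFunc.algebraMap_ne_zero hq
  have hdm : algebraMap K[X] (RatFunc K) f.denom ≠ 0 :=
    RatFunc.algebraMap_ne_zero f.denom_ne_zero
  have h0 : (algebraMap K[X] (RatFunc K) f.num) / (algebraMap K[X] (RatFunc K) f.denom)
      = algebraMap K[X] (RatFunc K) p / algebraMap K[X] (RatFunc K) q := by
    rw [RatFunc.num_div_denom]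
  rw [div_eq_div_iff hdm hqm, ← map_mul, ← map_mul] at h0
  have h1 : f.num * q = p * f.denom := RatFunc.algebraMap_injective K h0
  have h2 : derivative f.num * q + f.num * derivative q
      = derivative p * f.denom + p * derivative f.denom := by
    have := congrArg derivative h1
    simpa [derivative_mul] using this
  rw [rderiv, div_eq_div_iff (pow_ne_zero 2 hdm) (RatFunc.algebraMap_ne_zero (pow_ne_zero 2 hq))]
  simp only [← map_mul, ← map_sub, ← map_pow, ← map_mul]
  apply congrArg
  linear_combination (q * f.denom) * h2 - (derivative f.denom * q + derivative q * f.denom) * h1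

lemma rderiv_algebraMap (p : K[X]) :
    rderiv (algebraMap K[X] (RatFunc K) p) = algebraMap K[X] (RatFunc K) (derivative p) := by
  have := rderiv_div' (K := K) p 1 one_ne_zero
  simpa using this

@[simp] lemma rderiv_zero : rderiv (0 : RatFunc K) = 0 := by
  simpa using rderiv_algebraMap (0 : K[X])

@[simp] lemma rderiv_one : rderiv (1 : RatFunc K) = 0 := by
  simpa using rderiv_algebraMap (1 : K[X])

@[simp] lemma rderiv_X : rderiv (RatFunc.X : RatFunc K) = 1 := by
  have := rderiv_algebraMap (Polynomial.X : K[X])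
  simpa [RatFunc.algebraMap_X] using this

@[simp] lemma rderiv_C (a : K) : rderiv (RatFunc.C a) = 0 := by
  have := rderiv_algebraMap (Polynomial.C a : K[X])
  simpa [RatFunc.algebraMap_C] using this

@[simp] lemma rderiv_intCast (c : ℤ) : rderiv ((c : RatFunc K)) = 0 := by
  have := rderiv_algebraMap ((c : K[X]))
  simpa using this

lemma rderiv_aux_add (p1 q1 p2 q2 : K[X]) (h1 : q1 ≠ 0) (h2 : q2 ≠ 0) :
    rderiv (algebraMap K[X] (RatFunc K) p1 / algebraMap K[X] (RatFunc K) q1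
        + algebraMap K[X] (RatFunc K) p2 / algebraMap K[X] (RatFunc K) q2)
      = rderiv (algebraMap K[X] (RatFunc K) p1 / algebraMap K[X] (RatFunc K) q1)
        + rderiv (algebraMap K[X] (RatFunc K) p2 / algebraMap K[X] (RatFunc K) q2) := by
  rw [div_add_div _ _ (RatFunc.algebraMap_ne_zero h1) (RatFunc.algebraMap_ne_zero h2),
    ← map_mul, ← map_mul, ← map_mul, ← map_add,
    rderiv_div' _ _ (mul_ne_zero h1 h2), rderiv_div' _ _ h1, rderiv_div' _ _ h2,
    div_add_div _ _ (RatFunc.algebraMap_ne_zero (pow_ne_zero 2 h1))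
      (RatFunc.algebraMap_ne_zero (pow_ne_zero 2 h2)),
    div_eq_div_iff (RatFunc.algebraMap_ne_zero (pow_ne_zero 2 (mul_ne_zero h1 h2)))
      (mul_ne_zero (RatFunc.algebraMap_ne_zero (pow_ne_zero 2 h1))
        (RatFunc.algebraMap_ne_zero (pow_ne_zero 2 h2)))]
  simp only [← map_mul, ← map_sub, ← map_pow, ← map_add, ← map_mul]
  apply congrArg
  simp only [derivative_mul, derivative_add]
  ring

lemma rderiv_aux_mul (p1 q1 p2 q2 : K[X]) (h1 : q1 ≠ 0) (h2 : q2 ≠ 0) :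
    rderiv (algebraMap K[X] (RatFunc K) p1 / algebraMap K[X] (RatFunc K) q1
        * (algebraMap K[X] (RatFunc K) p2 / algebraMap K[X] (RatFunc K) q2))
      = rderiv (algebraMap K[X] (RatFunc K) p1 / algebraMap K[X] (RatFunc K) q1)
          * (algebraMap K[X] (RatFunc K) p2 / algebraMap K[X] (RatFunc K) q2)
        + algebraMap K[X] (RatFunc K) p1 / algebraMap K[X] (RatFunc K) q1
          * rderiv (algebraMap K[X] (RatFunc K) p2 / algebraMap K[X] (RatFunc K) q2) := by
  rw [div_mul_div_comm, ← map_mul, ← map_mul,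
    rderiv_div' _ _ (mul_ne_zero h1 h2), rderiv_div' _ _ h1, rderiv_div' _ _ h2,
    div_mul_div_comm, div_mul_div_comm,
    div_add_div _ _
      (mul_ne_zero (RatFunc.algebraMap_ne_zero (pow_ne_zero 2 h1)) (RatFunc.algebraMap_ne_zero h2))
      (mul_ne_zero (RatFunc.algebraMap_ne_zero h1) (RatFunc.algebraMap_ne_zero (pow_ne_zero 2 h2))),
    div_eq_div_iff (RatFunc.algebraMap_ne_zero (pow_ne_zero 2 (mul_ne_zero h1 h2)))
      (mul_ne_zero
        (mul_ne_zero (RatFunc.algebraMap_ne_zero (pow_ne_zero 2 h1)) (RatFunc.algebraMap_ne_zero h2))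
        (mul_ne_zero (RatFunc.algebraMap_ne_zero h1) (RatFunc.algebraMap_ne_zero (pow_ne_zero 2 h2))))]
  simp only [← map_mul, ← map_sub, ← map_pow, ← map_add, ← map_mul]
  apply congrArg
  simp only [derivative_mul]
  ring

lemma rderiv_add (f g : RatFunc K) : rderiv (f + g) = rderiv f + rderiv g := by
  have := rderiv_aux_add f.num f.denom g.num g.denom f.denom_ne_zero g.denom_ne_zero
  rwa [RatFunc.num_div_denom, RatFunc.num_div_denom] at this

lemma rderiv_mul (f g : RatFunc K) : rderiv (f * g) = rderiv f * g + f * rderiv g := by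
  have := rderiv_aux_mul f.num f.denom g.num g.denom f.denom_ne_zero g.denom_ne_zero
  rwa [RatFunc.num_div_denom, RatFunc.num_div_denom] at this


lemma rderiv_repr (f : RatFunc K) :
    rderiv f = algebraMap K[X] (RatFunc K)
        (derivative f.num * f.denom - f.num * derivative f.denom)
      / algebraMap K[X] (RatFunc K) (f.denom ^ 2) := by
  conv_lhs => rw [← RatFunc.num_div_denom f]
  rw [rderiv_div' _ _ f.denom_ne_zero]

lemma rderiv_neg (f : RatFunc K) : rderiv (-f) = -rderiv f := by
  have h := rderiv_add f (-f)
  simp only [add_neg_cancel, rderiv_zero] at h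
  exact (eq_neg_of_add_eq_zero_right h.symm)

lemma rderiv_sub (f g : RatFunc K) : rderiv (f - g) = rderiv f - rderiv g := by
  rw [sub_eq_add_neg, rderiv_add, rderiv_neg, sub_eq_add_neg]

lemma rderiv_inv (f : RatFunc K) (hf : f ≠ 0) :
    rderiv f⁻¹ = -rderiv f / f ^ 2 := by
  have hn : f.num ≠ 0 := RatFunc.num_ne_zero hf
  have hn' : algebraMap K[X] (RatFunc K) f.num ≠ 0 := RatFunc.algebraMap_ne_zero hn
  have hd' : algebraMap K[X] (RatFunc K) f.denom ≠ 0 :=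
    RatFunc.algebraMap_ne_zero f.denom_ne_zero
  have hinv : f⁻¹ = algebraMap K[X] (RatFunc K) f.denom / algebraMap K[X] (RatFunc K) f.num := by
    conv_lhs => rw [← RatFunc.num_div_denom f]
    rw [inv_div]
  rw [hinv, rderiv_div' _ _ hn, rderiv_repr f]
  have hf2 : f ^ 2 = algebraMap K[X] (RatFunc K) (f.num ^ 2)
      / algebraMap K[X] (RatFunc K) (f.denom ^ 2) := by
    conv_lhs => rw [← RatFunc.num_div_denom f]
    rw [div_pow, map_pow, map_pow]
  rw [hf2]
  have h3 : -(algebraMap K[X] (RatFunc K) (derivative f.num * f.denom - f.num * derivative f.denom)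
        / algebraMap K[X] (RatFunc K) (f.denom ^ 2))
      / (algebraMap K[X] (RatFunc K) (f.num ^ 2) / algebraMap K[X] (RatFunc K) (f.denom ^ 2))
      = -algebraMap K[X] (RatFunc K) (derivative f.num * f.denom - f.num * derivative f.denom)
        / algebraMap K[X] (RatFunc K) (f.num ^ 2) := by
    field_simp
  rw [h3, ← map_neg]
  congr 1
  ring

lemma rderiv_pow (f : RatFunc K) (n : ℕ) :
    rderiv (f ^ (n + 1)) = (n + 1 : RatFunc K) * f ^ n * rderiv f := by
  induction n with
  | zero => simp
  | succ m ih =>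
    have : f ^ (m + 2) = f ^ (m + 1) * f := by ring
    rw [this, rderiv_mul, ih]
    push_cast
    ring

lemma rderiv_zpow (f : RatFunc K) (hf : f ≠ 0) (k : ℤ) :
    rderiv (f ^ k) = (k : RatFunc K) * f ^ (k - 1) * rderiv f := by
  cases k with
  | ofNat n =>
    cases n with
    | zero => simp
    | succ m =>
      rw [Int.ofNat_eq_coe, zpow_natCast, rderiv_pow,
        show ((((m + 1 : ℕ) : ℤ)) - 1 : ℤ) = ((m : ℕ) : ℤ) by push_cast; ring,
        zpow_natCast]
      push_cast
      ring
  | negSucc m =>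
    rw [zpow_negSucc, rderiv_inv _ (pow_ne_zero _ hf), rderiv_pow,
      show (Int.negSucc m - 1 : ℤ) = -((m + 2 : ℕ) : ℤ) by
        rw [Int.negSucc_eq]; push_cast; ring,
      zpow_neg, zpow_natCast, Int.cast_negSucc]
    have h2 : f ^ (m + 2) ≠ 0 := pow_ne_zero _ hf
    have h1 : f ^ (m + 1) ≠ 0 := pow_ne_zero _ hf
    field_simp
    push_cast
    ring

lemma pairZ_add_left {n : ℕ} (m m' v : Fin n → ℤ) :
    pairZ (m + m') v = pairZ m v + pairZ m' v := by
  simp [pairZ, add_mul, Finset.sum_add_distrib]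

lemma X_sub_C_eq_map (z : K) :
    (RatFunc.X - RatFunc.C z : RatFunc K)
      = algebraMap K[X] (RatFunc K) (Polynomial.X - Polynomial.C z) := by
  rw [map_sub, RatFunc.algebraMap_X, RatFunc.algebraMap_C]

lemma X_sub_C_ne_zero' (z : K) : (RatFunc.X - RatFunc.C z : RatFunc K) ≠ 0 := by
  rw [X_sub_C_eq_map]
  exact RatFunc.algebraMap_ne_zero (Polynomial.X_sub_C_ne_zero z)

@[simp] lemma rderiv_X_sub_C (z : K) :
    rderiv (RatFunc.X - RatFunc.C z : RatFunc K) = 1 := by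
  rw [rderiv_sub]; simp

@[simp] lemma ratfunc_X_ne_zero : (RatFunc.X : RatFunc K) ≠ 0 := by
  rw [← RatFunc.algebraMap_X]
  exact RatFunc.algebraMap_ne_zero Polynomial.X_ne_zero

lemma logderiv_prod (S : Finset K) (a : K → ℤ) :
    RatFunc.X * rderiv (∏ z ∈ S, (RatFunc.X - RatFunc.C z) ^ (a z))
      = (∑ z ∈ S, (a z : RatFunc K) * RatFunc.X / (RatFunc.X - RatFunc.C z))
        * ∏ z ∈ S, (RatFunc.X - RatFunc.C z) ^ (a z) := by
  classical
  induction S using Finset.induction_on with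
  | empty => simp
  | insert z S hz ih =>
    rw [Finset.prod_insert hz, Finset.sum_insert hz, rderiv_mul,
      rderiv_zpow _ (X_sub_C_ne_zero' z), rderiv_X_sub_C,
      zpow_sub_one₀ (X_sub_C_ne_zero' z)]
    have hP : rderiv (∏ z ∈ S, (RatFunc.X - RatFunc.C z) ^ (a z))
        = (∑ z ∈ S, (a z : RatFunc K) * RatFunc.X / (RatFunc.X - RatFunc.C z))
          * (∏ z ∈ S, (RatFunc.X - RatFunc.C z) ^ (a z)) / RatFunc.X := by
      rw [← ih]; field_simp
    rw [hP]
    field_simp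

lemma phim_ne_zero {n : ℕ} (w : K →₀ (Fin n → ℤ)) (m : Fin n → ℤ) : phim w m ≠ 0 := by
  unfold phim
  exact Finset.prod_ne_zero_iff.2 fun z _ => zpow_ne_zero _ (X_sub_C_ne_zero' z)

lemma X_mul_rderiv_phim {n : ℕ} (w : K →₀ (Fin n → ℤ)) (m : Fin n → ℤ) :
    RatFunc.X * rderiv (phim w m) = alpham w m * phim w m := by
  unfold phim alpham
  rw [logderiv_prod w.support (fun z => -(pairZ m (w z)))]
  congr 1
  rw [← Finset.sum_neg_distrib]
  apply Finset.sum_congr rfl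
  intro z _
  push_cast
  ring

lemma alpham_add {n : ℕ} (w : K →₀ (Fin n → ℤ)) (m m' : Fin n → ℤ) :
    alpham w (m + m') = alpham w m + alpham w m' := by
  unfold alpham
  rw [← neg_add, ← Finset.sum_add_distrib]
  congr 1
  apply Finset.sum_congr rfl
  intro z _
  rw [pairZ_add_left]
  push_cast
  ring

def Qpoly (S : Finset K) : K[X] := ∏ z ∈ S, (Polynomial.X - Polynomial.C z)

def Ppoly (S : Finset K) (c : K → ℤ) : K[X] :=
  ∑ z ∈ S, Polynomial.C ((c z : K))
    * (Polynomial.X * ∏ z' ∈ S.erase z, (Polynomial.X - Polynomial.C z'))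

lemma Qpoly_monic (S : Finset K) : (Qpoly S).Monic :=
  monic_prod_of_monic _ _ fun z _ => monic_X_sub_C z

lemma Qpoly_ne_zero (S : Finset K) : Qpoly S ≠ 0 := (Qpoly_monic S).ne_zero

lemma Qpoly_natDegree (S : Finset K) : (Qpoly S).natDegree = S.card := by
  unfold Qpoly
  rw [natDegree_prod _ _ fun z _ => X_sub_C_ne_zero z]
  simp

lemma Qpoly_eval_mem {S : Finset K} {z : K} (hz : z ∈ S) : (Qpoly S).eval z = 0 := by
  unfold Qpoly
  rw [eval_prod]
  exact Finset.prod_eq_zero hz (by simp)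

lemma pi_ne_zero {S : Finset K} {z : K} :
    (∏ z' ∈ S.erase z, (z - z')) ≠ 0 := by
  rw [Finset.prod_ne_zero_iff]
  intro z' hz'
  exact sub_ne_zero.2 (Ne.symm (Finset.ne_of_mem_erase hz'))

lemma derivative_finset_prod (S : Finset K) :
    derivative (∏ z ∈ S, (Polynomial.X - Polynomial.C z))
      = ∑ z ∈ S, ∏ z' ∈ S.erase z, (Polynomial.X - Polynomial.C z') := by
  induction S using Finset.induction_on with
  | empty => simp
  | insert z S hz ih =>
    rw [Finset.prod_insert hz, derivative_mul, ih, Finset.sum_insert hz,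
      Finset.erase_insert hz]
    simp only [derivative_sub, derivative_X, derivative_C, sub_zero, one_mul]
    rw [Finset.mul_sum]
    congr 1
    apply Finset.sum_congr rfl
    intro b hb
    have hbz : b ≠ z := by rintro rfl; exact hz hb
    rw [Finset.erase_insert_of_ne hbz.symm, Finset.prod_insert (by
      simp only [Finset.mem_erase, not_and]
      intro _; intro h; exact absurd h hz)]

lemma Qpoly_deriv_eval {S : Finset K} {z : K} (hz : z ∈ S) :
    (derivative (Qpoly S)).eval z = ∏ z' ∈ S.erase z, (z - z') := by
  unfold Qpoly
  rw [derivative_finset_prod]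
  rw [eval_finset_sum]
  rw [Finset.sum_eq_single z]
  · simp [eval_prod]
  · intro b hb hbz
    rw [eval_prod]
    exact Finset.prod_eq_zero (Finset.mem_erase.2 ⟨Ne.symm hbz, hz⟩) (by simp)
  · intro h; exact absurd hz h

lemma Ppoly_eval_mem {S : Finset K} {c : K → ℤ} {z : K} (hz : z ∈ S) :
    (Ppoly S c).eval z = (c z : K) * z * ∏ z' ∈ S.erase z, (z - z') := by
  unfold Ppoly
  rw [eval_finset_sum]
  rw [Finset.sum_eq_single z]
  · simp [eval_prod]; ring
  · intro b hb hbz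
    have hzmem : z ∈ S.erase b := Finset.mem_erase.2 ⟨Ne.symm hbz, hz⟩
    rw [eval_mul, eval_mul, eval_prod]
    rw [Finset.prod_eq_zero hzmem (by simp)]
    ring
  · intro h; exact absurd hz h

lemma Ppoly_natDegree_le (S : Finset K) (c : K → ℤ) : (Ppoly S c).natDegree ≤ S.card := by
  unfold Ppoly
  apply Polynomial.natDegree_sum_le_of_forall_le
  intro z hz
  refine le_trans (natDegree_C_mul_le _ _) ?_
  have hm : (Polynomial.X * ∏ z' ∈ S.erase z, (Polynomial.X - Polynomial.C z') : K[X]).Monic :=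
    monic_X.mul (monic_prod_of_monic _ _ fun z' _ => monic_X_sub_C z')
  rw [natDegree_mul X_ne_zero (monic_prod_of_monic _ _ fun z' _ => monic_X_sub_C z').ne_zero]
  rw [natDegree_X, natDegree_prod _ _ fun z' _ => X_sub_C_ne_zero z']
  simp only [natDegree_X_sub_C, Finset.sum_const, smul_eq_mul, mul_one,
    Finset.card_erase_of_mem hz]
  have : 1 ≤ S.card := Finset.card_pos.2 ⟨z, hz⟩
  omega

lemma XProd_monic (S : Finset K) (z : K) :
    (Polynomial.X * ∏ z' ∈ S.erase z, (Polynomial.X - Polynomial.C z') : K[X]).Monic :=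
  monic_X.mul (monic_prod_of_monic _ _ fun z' _ => monic_X_sub_C z')

lemma XProd_natDegree {S : Finset K} {z : K} (hz : z ∈ S) :
    (Polynomial.X * ∏ z' ∈ S.erase z, (Polynomial.X - Polynomial.C z') : K[X]).natDegree
      = S.card := by
  rw [natDegree_mul X_ne_zero (monic_prod_of_monic _ _ fun z' _ => monic_X_sub_C z').ne_zero,
    natDegree_X, natDegree_prod _ _ fun z' _ => X_sub_C_ne_zero z']
  simp only [natDegree_X_sub_C, Finset.sum_const, smul_eq_mul, mul_one,
    Finset.card_erase_of_mem hz]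
  have : 1 ≤ S.card := Finset.card_pos.2 ⟨z, hz⟩
  omega

lemma Ppoly_coeff_card (S : Finset K) (c : K → ℤ) :
    (Ppoly S c).coeff S.card = ∑ z ∈ S, (c z : K) := by
  unfold Ppoly
  rw [finset_sum_coeff]
  apply Finset.sum_congr rfl
  intro z hz
  rw [coeff_C_mul, ← XProd_natDegree hz, Monic.coeff_natDegree (XProd_monic S z), mul_one]

lemma Qpoly_coeff_card (S : Finset K) : (Qpoly S).coeff S.card = 1 := by
  rw [← Qpoly_natDegree S, Monic.coeff_natDegree (Qpoly_monic S)]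

lemma scalar_key {K : Type*} [Field K] [CharZero K] {n : ℕ}
    (e : Fin n → ℤ) (s d : ℤ) (hd : 0 < d) (u : Fin n → ℤ)
    (e' : Fin n → ℤ) (s' : ℤ) (w : K →₀ (Fin n → ℤ))
    (hs : d * s = -1 - pairZ e u) (hs' : d * s' = -1 - pairZ e' u)
    (m : Fin n → ℤ) (f : RatFunc K) :
    (RatFunc.X : RatFunc K) ^ s
        * ((pairZ (m + e') u : RatFunc K)
              * ((RatFunc.X : RatFunc K) ^ s' * phim w e'
                * ((pairZ m u : RatFunc K) * f
                  + (d : RatFunc K) * (RatFunc.X * rderiv f - alpham w m * f)))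
            + (d : RatFunc K) * RatFunc.X
              * rderiv ((RatFunc.X : RatFunc K) ^ s' * phim w e'
                * ((pairZ m u : RatFunc K) * f
                  + (d : RatFunc K) * (RatFunc.X * rderiv f - alpham w m * f))))
      - (RatFunc.X : RatFunc K) ^ s' * phim w e'
        * ((pairZ (m + e) u : RatFunc K)
              * ((RatFunc.X : RatFunc K) ^ s
                * ((pairZ m u : RatFunc K) * f + (d : RatFunc K) * RatFunc.X * rderiv f))
            + (d : RatFunc K)
              * (RatFunc.X * rderiv ((RatFunc.X : RatFunc K) ^ s
                    * ((pairZ m u : RatFunc K) * f + (d : RatFunc K) * RatFunc.X * rderiv f))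
                - alpham w (m + e)
                  * ((RatFunc.X : RatFunc K) ^ s
                    * ((pairZ m u : RatFunc K) * f + (d : RatFunc K) * RatFunc.X * rderiv f))))
    = (d : RatFunc K) * ((RatFunc.X : RatFunc K) ^ s * ((RatFunc.X : RatFunc K) ^ s' * phim w e'))
        * ((alpham w m + (pairZ m u : RatFunc K) * (alpham w e + alpham w e')
              - (d : RatFunc K) * alpham w e' * alpham w m
              - (d : RatFunc K) * RatFunc.X * rderiv (alpham w m)) * f
          + (d : RatFunc K) * (alpham w e + alpham w e') * (RatFunc.X * rderiv f)) := by
  have hX : (RatFunc.X : RatFunc K) ≠ 0 := ratfunc_X_ne_zero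
  have hXp : ∀ k : ℤ, rderiv ((RatFunc.X : RatFunc K) ^ k)
      = (k : RatFunc K) * ((RatFunc.X : RatFunc K) ^ k * (RatFunc.X : RatFunc K)⁻¹) := by
    intro k
    rw [rderiv_zpow _ hX k, rderiv_X, zpow_sub_one₀ hX]
    ring
  have hphi : rderiv (phim w e') = alpham w e' * phim w e' * (RatFunc.X : RatFunc K)⁻¹ := by
    rw [← X_mul_rderiv_phim w e']
    field_simp
  have hd0 : (d : RatFunc K) ≠ 0 := by
    rw [← map_intCast (algebraMap K[X] (RatFunc K)) d]
    exact RatFunc.algebraMap_ne_zero (by exact_mod_cast Int.cast_ne_zero.2 (ne_of_gt hd))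
  have hsR : (s : RatFunc K) = (-1 - (pairZ e u : RatFunc K)) / (d : RatFunc K) := by
    rw [eq_div_iff hd0]
    exact_mod_cast congrArg (fun x : ℤ => (x : RatFunc K)) (by linarith [hs] : s * d = -1 - pairZ e u)
  have hsR' : (s' : RatFunc K) = (-1 - (pairZ e' u : RatFunc K)) / (d : RatFunc K) := by
    rw [eq_div_iff hd0]
    exact_mod_cast congrArg (fun x : ℤ => (x : RatFunc K)) (by linarith [hs'] : s' * d = -1 - pairZ e' u)
  simp only [rderiv_mul, rderiv_add, rderiv_sub, rderiv_intCast, rderiv_X, hXp, hphi,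
    alpham_add, pairZ_add_left]
  push_cast
  rw [hsR, hsR']
  set S := (RatFunc.X : RatFunc K) ^ s with hS
  set T := (RatFunc.X : RatFunc K) ^ s' with hT
  have hS0 : S ≠ 0 := zpow_ne_zero _ hX
  have hT0 : T ≠ 0 := zpow_ne_zero _ hX
  have hPhi0 : phim w e' ≠ 0 := phim_ne_zero w e'
  field_simp
  ring

lemma prod_erase_ne_zero' (S : Finset K) (z : K) :
    algebraMap K[X] (RatFunc K) (∏ z' ∈ S.erase z, (Polynomial.X - Polynomial.C z')) ≠ 0 :=
  RatFunc.algebraMap_ne_zero (monic_prod_of_monic _ _ fun z' _ => monic_X_sub_C z').ne_zero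

lemma alpham_repr {n : ℕ} (w : K →₀ (Fin n → ℤ)) (v : Fin n → ℤ) :
    alpham w v = -(algebraMap K[X] (RatFunc K) (Ppoly w.support fun z => pairZ v (w z))
      / algebraMap K[X] (RatFunc K) (Qpoly w.support)) := by
  unfold alpham Ppoly
  rw [map_sum, Finset.sum_div]
  congr 1
  apply Finset.sum_congr rfl
  intro z hz
  have hQ : Qpoly w.support
      = (Polynomial.X - Polynomial.C z)
        * ∏ z' ∈ w.support.erase z, (Polynomial.X - Polynomial.C z') :=
    (Finset.mul_prod_erase _ _ hz).symm
  have hC : (RatFunc.C ((pairZ v (w z) : K)))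
      = ((pairZ v (w z) : ℤ) : RatFunc K) := by
    rw [← RatFunc.algebraMap_eq_C, map_intCast]
  have hPe2 : (∏ x ∈ w.support.erase z, (RatFunc.X - RatFunc.C x) : RatFunc K) ≠ 0 :=
    Finset.prod_ne_zero_iff.2 fun x _ => X_sub_C_ne_zero' x
  rw [hQ]
  simp only [map_mul, map_sub, map_prod, RatFunc.algebraMap_X, RatFunc.algebraMap_C, hC,
    ← mul_assoc]
  rw [mul_div_mul_right _ _ hPe2]

lemma alpham_eq_zero_iff {n : ℕ} [CharZero K] (w : K →₀ (Fin n → ℤ)) (hw0 : w 0 = 0)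
    (v : Fin n → ℤ) :
    alpham w v = 0 ↔ ∀ z ∈ w.support, pairZ v (w z) = 0 := by
  constructor
  · intro h z hz
    rw [alpham_repr, neg_eq_zero, _root_.div_eq_zero_iff] at h
    rcases h with h | h
    · have hP : Ppoly w.support (fun z => pairZ v (w z)) = 0 :=
        RatFunc.algebraMap_injective K (by simpa using h)
      have h2 := congrArg (Polynomial.eval z) hP
      rw [Ppoly_eval_mem hz, Polynomial.eval_zero] at h2
      have hz0 : z ≠ 0 := by
        intro hzz
        rw [hzz, Finsupp.mem_support_iff] at hz
        exact hz hw0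
      have hpi : (∏ z' ∈ w.support.erase z, (z - z')) ≠ 0 := pi_ne_zero
      have : ((pairZ v (w z) : ℤ) : K) = 0 := by
        rcases mul_eq_zero.1 h2 with h3 | h3
        · rcases mul_eq_zero.1 h3 with h4 | h4
          · exact h4
          · exact absurd h4 hz0
        · exact absurd h3 hpi
      exact_mod_cast this
    · exact absurd h (RatFunc.algebraMap_ne_zero (Qpoly_ne_zero _))
  · intro h
    unfold alpham
    rw [neg_eq_zero]
    apply Finset.sum_eq_zero
    intro z hz
    rw [h z hz]
    simp

lemma DhorPt_single {n : ℕ} (z₀ : K) (e : Fin n → ℤ) (s d : ℤ) (u : Fin n → ℤ)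
    (m : Fin n → ℤ) (f : RatFunc K) :
    DhorPt z₀ e s d u (Finsupp.single m f)
      = Finsupp.single (m + e) ((RatFunc.X - RatFunc.C z₀) ^ s
          * ((pairZ m u : RatFunc K) * f
            + (d : RatFunc K) * (RatFunc.X - RatFunc.C z₀) * rderiv f)) := by
  unfold DhorPt
  rw [Finsupp.sum_single_index]
  simp

lemma EhorTw_single {n : ℕ} (e' : Fin n → ℤ) (s' d' : ℤ) (u' : Fin n → ℤ)
    (w : K →₀ (Fin n → ℤ)) (m : Fin n → ℤ) (f : RatFunc K) :
    EhorTw e' s' d' u' w (Finsupp.single m f)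
      = Finsupp.single (m + e') ((RatFunc.X : RatFunc K) ^ s' * phim w e'
          * ((pairZ m u' : RatFunc K) * f
            + (d' : RatFunc K) * (RatFunc.X * rderiv f - alpham w m * f))) := by
  unfold EhorTw
  rw [Finsupp.sum_single_index]
  simp

lemma DhorPt_add {n : ℕ} (z₀ : K) (e : Fin n → ℤ) (s d : ℤ) (u : Fin n → ℤ)
    (b₁ b₂ : (Fin n → ℤ) →₀ RatFunc K) :
    DhorPt z₀ e s d u (b₁ + b₂) = DhorPt z₀ e s d u b₁ + DhorPt z₀ e s d u b₂ := by
  unfold DhorPt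
  apply Finsupp.sum_add_index'
  · intro m; simp
  · intro m f₁ f₂
    rw [rderiv_add, ← Finsupp.single_add]
    congr 1
    ring

lemma EhorTw_add {n : ℕ} (e' : Fin n → ℤ) (s' d' : ℤ) (u' : Fin n → ℤ)
    (w : K →₀ (Fin n → ℤ)) (b₁ b₂ : (Fin n → ℤ) →₀ RatFunc K) :
    EhorTw e' s' d' u' w (b₁ + b₂) = EhorTw e' s' d' u' w b₁ + EhorTw e' s' d' u' w b₂ := by
  unfold EhorTw
  apply Finsupp.sum_add_index'
  · intro m; simp
  · intro m f₁ f₂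
    rw [rderiv_add, ← Finsupp.single_add]
    congr 1
    ring

lemma DhorPt_zero {n : ℕ} (z₀ : K) (e : Fin n → ℤ) (s d : ℤ) (u : Fin n → ℤ) :
    DhorPt z₀ e s d u 0 = 0 := by
  unfold DhorPt
  exact Finsupp.sum_zero_index

lemma EhorTw_zero {n : ℕ} (e' : Fin n → ℤ) (s' d' : ℤ) (u' : Fin n → ℤ)
    (w : K →₀ (Fin n → ℤ)) : EhorTw e' s' d' u' w 0 = 0 := by
  unfold EhorTw
  exact Finsupp.sum_zero_index

lemma comm_iff_forall_single {n : ℕ} (e : Fin n → ℤ) (s d : ℤ) (u : Fin n → ℤ)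
    (e' : Fin n → ℤ) (s' : ℤ) (w : K →₀ (Fin n → ℤ)) :
    (∀ b : (Fin n → ℤ) →₀ RatFunc K,
        DhorPt 0 e s d u (EhorTw e' s' d u w b)
          = EhorTw e' s' d u w (DhorPt 0 e s d u b))
      ↔ ∀ (m : Fin n → ℤ) (f : RatFunc K),
          DhorPt 0 e s d u (EhorTw e' s' d u w (Finsupp.single m f))
            = EhorTw e' s' d u w (DhorPt 0 e s d u (Finsupp.single m f)) := by
  constructor
  · intro h m f; exact h _
  · intro h b
    induction b using Finsupp.induction with
    | zero => simp [DhorPt_zero, EhorTw_zero]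
    | single_add m f b _ _ ih =>
      rw [EhorTw_add, DhorPt_add, DhorPt_add, EhorTw_add, ih, h m f]

lemma single_comm_iff {n : ℕ} [CharZero K]
    (e : Fin n → ℤ) (s d : ℤ) (hd : 0 < d) (u : Fin n → ℤ)
    (e' : Fin n → ℤ) (s' : ℤ) (w : K →₀ (Fin n → ℤ))
    (hs : d * s = -1 - pairZ e u) (hs' : d * s' = -1 - pairZ e' u)
    (m : Fin n → ℤ) (f : RatFunc K) :
    (DhorPt 0 e s d u (EhorTw e' s' d u w (Finsupp.single m f))
        = EhorTw e' s' d u w (DhorPt 0 e s d u (Finsupp.single m f)))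
      ↔ (alpham w m + (pairZ m u : RatFunc K) * (alpham w e + alpham w e')
            - (d : RatFunc K) * alpham w e' * alpham w m
            - (d : RatFunc K) * RatFunc.X * rderiv (alpham w m)) * f
          + (d : RatFunc K) * (alpham w e + alpham w e') * (RatFunc.X * rderiv f) = 0 := by
  have hX : (RatFunc.X : RatFunc K) ≠ 0 := ratfunc_X_ne_zero
  have hdR : (d : RatFunc K) ≠ 0 := by
    rw [← map_intCast (algebraMap K[X] (RatFunc K)) d]
    exact RatFunc.algebraMap_ne_zero (by exact_mod_cast Int.cast_ne_zero.2 (ne_of_gt hd))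
  simp only [EhorTw_single, DhorPt_single, map_zero, sub_zero]
  rw [show m + e' + e = m + e + e' from add_right_comm m e' e]
  rw [(Finsupp.single_injective (m + e + e')).eq_iff]
  rw [← sub_eq_zero, scalar_key e s d hd u e' s' w hs hs' m f]
  constructor
  · intro h
    rcases mul_eq_zero.1 h with h1 | h1
    · exact absurd h1 (mul_ne_zero hdR (mul_ne_zero (zpow_ne_zero _ hX)
        (mul_ne_zero (zpow_ne_zero _ hX) (phim_ne_zero w e'))))
    · exact h1
  · intro h; rw [h, mul_zero]

lemma rderiv_alpham_repr {n : ℕ} (w : K →₀ (Fin n → ℤ)) (m : Fin n → ℤ) :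
    rderiv (alpham w m)
      = -(algebraMap K[X] (RatFunc K)
            (derivative (Ppoly w.support fun z => pairZ m (w z)) * Qpoly w.support
              - Ppoly w.support (fun z => pairZ m (w z)) * derivative (Qpoly w.support))
          / algebraMap K[X] (RatFunc K) ((Qpoly w.support) ^ 2)) := by
  rw [alpham_repr, rderiv_neg, rderiv_div' _ _ (Qpoly_ne_zero _)]

lemma algC_intCast (d : ℤ) :
    (algebraMap K[X] (RatFunc K)) (Polynomial.C ((d : ℤ) : K)) = (d : RatFunc K) := by
  rw [RatFunc.algebraMap_C, ← RatFunc.algebraMap_eq_C, map_intCast]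

lemma cond_repr {n : ℕ} (w : K →₀ (Fin n → ℤ)) (d : ℤ) (e' m : Fin n → ℤ) :
    alpham w m - (d : RatFunc K) * alpham w e' * alpham w m
        - (d : RatFunc K) * RatFunc.X * rderiv (alpham w m)
      = -(algebraMap K[X] (RatFunc K)
            (Ppoly w.support (fun z => pairZ m (w z)) * Qpoly w.support
              + Polynomial.C ((d : ℤ) : K)
                * (Ppoly w.support (fun z => pairZ e' (w z))
                  * Ppoly w.support (fun z => pairZ m (w z)))
              - Polynomial.C ((d : ℤ) : K)
                * (Polynomial.X
                  * (derivative (Ppoly w.support fun z => pairZ m (w z)) * Qpoly w.support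
                    - Ppoly w.support (fun z => pairZ m (w z)) * derivative (Qpoly w.support))))
          / algebraMap K[X] (RatFunc K) ((Qpoly w.support) ^ 2)) := by
  have hQ : algebraMap K[X] (RatFunc K) (Qpoly w.support) ≠ 0 :=
    RatFunc.algebraMap_ne_zero (Qpoly_ne_zero _)
  rw [rderiv_alpham_repr, alpham_repr w m, alpham_repr w e']
  simp only [map_add, map_sub, map_mul, algC_intCast, RatFunc.algebraMap_X, map_pow]
  field_simp
  ring

lemma cond_iff_poly {n : ℕ} (w : K →₀ (Fin n → ℤ)) (d : ℤ) (e' m : Fin n → ℤ) :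
    (alpham w m - (d : RatFunc K) * alpham w e' * alpham w m
        - (d : RatFunc K) * RatFunc.X * rderiv (alpham w m) = 0)
      ↔ (Ppoly w.support (fun z => pairZ m (w z)) * Qpoly w.support
          + Polynomial.C ((d : ℤ) : K)
            * (Ppoly w.support (fun z => pairZ e' (w z))
              * Ppoly w.support (fun z => pairZ m (w z)))
          - Polynomial.C ((d : ℤ) : K)
            * (Polynomial.X
              * (derivative (Ppoly w.support fun z => pairZ m (w z)) * Qpoly w.support
                - Ppoly w.support (fun z => pairZ m (w z)) * derivative (Qpoly w.support))) = 0) := by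
  rw [cond_repr, neg_eq_zero, _root_.div_eq_zero_iff]
  constructor
  · intro h
    rcases h with h | h
    · exact RatFunc.algebraMap_injective K (by simpa using h)
    · exact absurd h (RatFunc.algebraMap_ne_zero (pow_ne_zero 2 (Qpoly_ne_zero _)))
  · intro h
    left
    rw [h, map_zero]

lemma T_coeff (S : Finset K) (hk : 1 ≤ S.card) (c ce' : K → ℤ) (dK : K) :
    (Ppoly S c * Qpoly S + Polynomial.C dK * (Ppoly S ce' * Ppoly S c)
        - Polynomial.C dK
          * (Polynomial.X
            * (derivative (Ppoly S c) * Qpoly S - Ppoly S c * derivative (Qpoly S)))).coeff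
        (S.card + S.card)
      = (∑ z ∈ S, (c z : K)) + dK * ((∑ z ∈ S, (ce' z : K)) * ∑ z ∈ S, (c z : K)) := by
  set k := S.card with hkdef
  have hQd : (Qpoly S).natDegree ≤ k := le_of_eq (Qpoly_natDegree S)
  have hPd : (Ppoly S c).natDegree ≤ k := Ppoly_natDegree_le S c
  have hPd' : (Ppoly S ce').natDegree ≤ k := Ppoly_natDegree_le S ce'
  have hQc : (Qpoly S).coeff k = 1 := Qpoly_coeff_card S
  have hD1 : (derivative (Ppoly S c)).natDegree ≤ k - 1 :=
    le_trans (natDegree_derivative_le _) (by omega)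
  have hD2 : (derivative (Qpoly S)).natDegree ≤ k - 1 :=
    le_trans (natDegree_derivative_le _) (by omega)
  have h1 : (derivative (Ppoly S c) * Qpoly S).coeff (k + (k - 1))
      = ((Ppoly S c).coeff k * (k : K)) * 1 := by
    rw [show k + (k - 1) = (k - 1) + k from by omega,
      Polynomial.coeff_mul_add_eq_of_natDegree_le hD1 hQd, Polynomial.coeff_derivative,
      show (k - 1) + 1 = k from by omega, hQc]
    rw [Nat.cast_sub hk]
    push_cast
    ring
  have h2 : (Ppoly S c * derivative (Qpoly S)).coeff (k + (k - 1))
      = (Ppoly S c).coeff k * ((Qpoly S).coeff k * (k : K)) := by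
    rw [Polynomial.coeff_mul_add_eq_of_natDegree_le hPd hD2, Polynomial.coeff_derivative,
      show (k - 1) + 1 = k from by omega]
    rw [Nat.cast_sub hk]
    push_cast
    ring
  rw [coeff_sub, coeff_add, coeff_C_mul, coeff_C_mul,
    Polynomial.coeff_mul_add_eq_of_natDegree_le hPd hQd,
    Polynomial.coeff_mul_add_eq_of_natDegree_le hPd' hPd,
    show k + k = (k + (k - 1)) + 1 from by omega, Polynomial.coeff_X_mul, coeff_sub, h1, h2,
    hQc, Ppoly_coeff_card, Ppoly_coeff_card]
  ring

lemma alpham_of_support_empty {n : ℕ} {w : K →₀ (Fin n → ℤ)} (h : w.support = ∅)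
    (v : Fin n → ℤ) : alpham w v = 0 := by
  unfold alpham
  rw [h]
  simp

lemma AB_classification {n : ℕ} [CharZero K] (e : Fin n → ℤ) (d : ℤ) (hd : 0 < d)
    (u e' : Fin n → ℤ) (w : K →₀ (Fin n → ℤ)) (hw0 : w 0 = 0)
    (hcoh : ∀ z : K, w z ≠ 0 → 1 ≤ pairZ e (w z) ∧ pairZ e' (w z) ≤ -1) :
    ((∀ m : Fin n → ℤ, alpham w m + (pairZ m u : RatFunc K) * (alpham w e + alpham w e')
          - (d : RatFunc K) * alpham w e' * alpham w m
          - (d : RatFunc K) * RatFunc.X * rderiv (alpham w m) = 0)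
        ∧ alpham w e + alpham w e' = 0)
      ↔ (∀ z : K, w z = 0)
        ∨ (d = 1 ∧ ∃ z₁ : K, z₁ ≠ 0 ∧ w z₁ ≠ 0 ∧ pairZ e (w z₁) = 1 ∧ pairZ e' (w z₁) = -1
            ∧ ∀ z : K, z ≠ z₁ → w z = 0) := by
  have hdK : ((d : ℤ) : K) ≠ 0 := Int.cast_ne_zero.2 (ne_of_gt hd)
  constructor
  · rintro ⟨hA, hB⟩
    have hA' : ∀ m : Fin n → ℤ, alpham w m
        - (d : RatFunc K) * alpham w e' * alpham w m
        - (d : RatFunc K) * RatFunc.X * rderiv (alpham w m) = 0 := by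
      intro m
      have := hA m
      rw [hB, mul_zero, add_zero] at this
      exact this
    have hBz : ∀ z ∈ w.support, pairZ e (w z) + pairZ e' (w z) = 0 := by
      have h1 : alpham w (e + e') = 0 := by rw [alpham_add, hB]
      intro z hz
      have := (alpham_eq_zero_iff w hw0 (e + e')).1 h1 z hz
      rwa [pairZ_add_left] at this
    by_cases hS : w.support = ∅
    · left
      intro z
      by_contra hz
      have : z ∈ w.support := Finsupp.mem_support_iff.2 hz
      rw [hS] at this
      exact absurd this (Finset.notMem_empty z)
    · right
      have hk : 1 ≤ w.support.card :=
        Finset.card_pos.2 (Finset.nonempty_of_ne_empty hS)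
      have hTe := (cond_iff_poly w d e' e).1 (hA' e)
      -- pole evaluation: b_z = -1
      have hbz : ∀ z ∈ w.support, pairZ e' (w z) = -1 := by
        intro z hz
        have hwz : w z ≠ 0 := Finsupp.mem_support_iff.1 hz
        have hz0 : z ≠ 0 := by
          intro h
          rw [h] at hwz
          exact hwz hw0
        have hev := congrArg (Polynomial.eval z) hTe
        simp only [eval_add, eval_sub, eval_mul, eval_C, eval_X, eval_zero,
          Qpoly_eval_mem hz, Ppoly_eval_mem hz, Qpoly_deriv_eval hz, mul_zero, zero_mul] at hev
        set π := ∏ z' ∈ w.support.erase z, (z - z') with hπ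
        have hπ0 : π ≠ 0 := pi_ne_zero
        have hfact : ((pairZ e (w z) : K) * ((pairZ e' (w z) : K) + 1))
            * (((d : ℤ) : K) * (z * z) * (π * π)) = 0 := by
          linear_combination hev
        have h1 : ((pairZ e (w z) : K) * ((pairZ e' (w z) : K) + 1)) = 0 := by
          rcases mul_eq_zero.1 hfact with h | h
          · exact h
          · exact absurd h (mul_ne_zero (mul_ne_zero hdK (mul_ne_zero hz0 hz0))
              (mul_ne_zero hπ0 hπ0))
        have h2 : pairZ e (w z) * (pairZ e' (w z) + 1) = 0 := by exact_mod_cast h1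
        have h3 := (hcoh z hwz).1
        rcases mul_eq_zero.1 h2 with h | h
        · omega
        · omega
      have haz : ∀ z ∈ w.support, pairZ e (w z) = 1 := by
        intro z hz
        have := hBz z hz
        have := hbz z hz
        omega
      -- leading coefficient
      have hco : (Ppoly w.support (fun z => pairZ e (w z)) * Qpoly w.support
          + Polynomial.C ((d : ℤ) : K)
            * (Ppoly w.support (fun z => pairZ e' (w z))
              * Ppoly w.support (fun z => pairZ e (w z)))
          - Polynomial.C ((d : ℤ) : K)
            * (Polynomial.X
              * (derivative (Ppoly w.support fun z => pairZ e (w z)) * Qpoly w.support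
                - Ppoly w.support (fun z => pairZ e (w z))
                  * derivative (Qpoly w.support)))).coeff
            (w.support.card + w.support.card) = 0 := by
        rw [hTe]
        simp
      rw [T_coeff w.support hk _ _ _] at hco
      have hsum1 : (∑ z ∈ w.support, ((pairZ e (w z) : ℤ) : K)) = (w.support.card : K) := by
        rw [Finset.sum_congr rfl fun z hz => by rw [haz z hz, Int.cast_one]]
        simp
      have hsum2 : (∑ z ∈ w.support, ((pairZ e' (w z) : ℤ) : K)) = -(w.support.card : K) := by
        rw [Finset.sum_congr rfl fun z hz => by rw [hbz z hz]]
        push_cast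
        simp
      rw [hsum1, hsum2] at hco
      have hZ : ((w.support.card : ℤ) + d * (-(w.support.card : ℤ) * (w.support.card : ℤ)))
          = 0 := by
        exact_mod_cast hco
      have hkZ : (1 : ℤ) ≤ (w.support.card : ℤ) := by exact_mod_cast hk
      have h5 : (w.support.card : ℤ) * (1 - d * (w.support.card : ℤ)) = 0 := by
        linear_combination hZ
      have hdk : d * (w.support.card : ℤ) = 1 := by
        rcases mul_eq_zero.1 h5 with h | h
        · omega
        · omega
      have hd1 : d = 1 := by nlinarith
      have hk1 : w.support.card = 1 := by
        have : (w.support.card : ℤ) = 1 := by nlinarith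
        exact_mod_cast this
      obtain ⟨z₁, hz₁⟩ := Finset.card_eq_one.1 hk1
      have hz₁mem : z₁ ∈ w.support := by rw [hz₁]; exact Finset.mem_singleton_self z₁
      have hwz₁ : w z₁ ≠ 0 := Finsupp.mem_support_iff.1 hz₁mem
      refine ⟨hd1, z₁, ?_, hwz₁, haz z₁ hz₁mem, hbz z₁ hz₁mem, ?_⟩
      · intro h
        rw [h] at hwz₁
        exact hwz₁ hw0
      · intro z hz
        by_contra hwz
        have : z ∈ w.support := Finsupp.mem_support_iff.2 hwz
        rw [hz₁, Finset.mem_singleton] at this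
        exact hz this
  · rintro (hall | ⟨hd1, z₁, hz₁0, hwz₁, hpe, hpe', hother⟩)
    · have hS : w.support = ∅ := by
        rw [Finset.eq_empty_iff_forall_notMem]
        intro z hz
        exact (Finsupp.mem_support_iff.1 hz) (hall z)
      constructor
      · intro m
        simp [alpham_of_support_empty hS]
      · simp [alpham_of_support_empty hS]
    · subst hd1
      have hS : w.support = {z₁} := by
        ext z
        simp only [Finsupp.mem_support_iff, Finset.mem_singleton]
        constructor
        · intro hz
          by_contra h
          exact hz (hother z h)
        · intro h; rw [h]; exact hwz₁
      have hXz : (RatFunc.X - RatFunc.C z₁ : RatFunc K) ≠ 0 := X_sub_C_ne_zero' z₁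
      have halp : ∀ v : Fin n → ℤ, alpham w v
          = -((pairZ v (w z₁) : RatFunc K) * RatFunc.X / (RatFunc.X - RatFunc.C z₁)) := by
        intro v
        unfold alpham
        rw [hS, Finset.sum_singleton]
      have hB : alpham w e + alpham w e' = 0 := by
        rw [halp, halp, hpe, hpe']
        push_cast
        ring
      refine ⟨?_, hB⟩
      intro m
      rw [hB, mul_zero, add_zero]
      rw [cond_iff_poly w 1 e' m]
      unfold Ppoly Qpoly
      rw [hS]
      simp only [Finset.sum_singleton, Finset.prod_singleton, Finset.erase_singleton,
        Finset.prod_empty, mul_one, hpe']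
      push_cast
      simp only [derivative_mul, derivative_X, derivative_sub, derivative_C, derivative_one,
        map_one, map_neg]
      ring

end Helpers

theorem adjacent_horizontal_derivations_commute_iff
    {K : Type*} [Field K] [IsAlgClosed K] [CharZero K] {n : ℕ} (hn : 1 ≤ n)
    (e : Fin n → ℤ) (s d : ℤ) (hd : 0 < d) (u : Fin n → ℤ)
    (e' : Fin n → ℤ) (s' : ℤ) (w : K →₀ (Fin n → ℤ)) (hw0 : w 0 = 0)
    (hs : d * s = -1 - pairZ e u) (hs' : d * s' = -1 - pairZ e' u)
    (hcoh : ∀ z : K, w z ≠ 0 → 1 ≤ pairZ e (w z) ∧ pairZ e' (w z) ≤ -1) :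
    (∀ b : (Fin n → ℤ) →₀ RatFunc K,
        DhorPt 0 e s d u (EhorTw e' s' d u w b)
          = EhorTw e' s' d u w (DhorPt 0 e s d u b))
    ↔ (∀ z : K, w z = 0)
      ∨ (d = 1 ∧ ∃ z₁ : K, z₁ ≠ 0 ∧ w z₁ ≠ 0
          ∧ pairZ e (w z₁) = 1 ∧ pairZ e' (w z₁) = -1
          ∧ ∀ z : K, z ≠ z₁ → w z = 0) := by
  have hX : (RatFunc.X : RatFunc K) ≠ 0 := ratfunc_X_ne_zero
  have hdR : (d : RatFunc K) ≠ 0 := by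
    rw [← map_intCast (algebraMap K[X] (RatFunc K)) d]
    exact RatFunc.algebraMap_ne_zero (by exact_mod_cast Int.cast_ne_zero.2 (ne_of_gt hd))
  rw [comm_iff_forall_single e s d u e' s' w]
  have h1 : (∀ (m : Fin n → ℤ) (f : RatFunc K),
        DhorPt 0 e s d u (EhorTw e' s' d u w (Finsupp.single m f))
          = EhorTw e' s' d u w (DhorPt 0 e s d u (Finsupp.single m f)))
      ↔ ((∀ m : Fin n → ℤ, alpham w m + (pairZ m u : RatFunc K)
              * (alpham w e + alpham w e')
            - (d : RatFunc K) * alpham w e' * alpham w m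
            - (d : RatFunc K) * RatFunc.X * rderiv (alpham w m) = 0)
          ∧ alpham w e + alpham w e' = 0) := by
    constructor
    · intro h
      have hA : ∀ m : Fin n → ℤ, alpham w m + (pairZ m u : RatFunc K)
            * (alpham w e + alpham w e')
          - (d : RatFunc K) * alpham w e' * alpham w m
          - (d : RatFunc K) * RatFunc.X * rderiv (alpham w m) = 0 := by
        intro m
        have h2 := (single_comm_iff e s d hd u e' s' w hs hs' m 1).1 (h m 1)
        simpa using h2
      refine ⟨hA, ?_⟩
      have h2 := (single_comm_iff e s d hd u e' s' w hs hs' 0 RatFunc.X).1 (h 0 RatFunc.X)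
      rw [hA 0] at h2
      simp only [zero_mul, zero_add, rderiv_X, mul_one] at h2
      rcases mul_eq_zero.1 h2 with h3 | h3
      · rcases mul_eq_zero.1 h3 with h4 | h4
        · exact absurd h4 hdR
        · exact h4
      · exact absurd h3 hX
    · rintro ⟨hA, hB⟩ m f
      rw [single_comm_iff e s d hd u e' s' w hs hs' m f, hA m, hB]
      ring
  rw [h1, AB_classification e d hd u e' w hw0 hcoh]
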